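/- In the Chevalley-Eilenberg complex of the 7-dimensional Lie algebra above, α7 ∧ (dα7)^2 ∧ α1 = -2 α1∧α2∧α3∧α5∧α6∧α7 = 2 d(α2∧α4∧α5∧α6∧α7); in particular α7 ∧ (dα7)^2 ∧ α1 is exact. -/
import Mathlib


/-- The dual basis 1-forms `α1,…,α7` of the 7-dimensional Lie algebra, viewed in the
exterior algebra `Λ g*`. -/
noncomputable def a7 (i : Fin 7) : ExteriorAlgebra ℝ (Module.Dual ℝ (Fin 7 → ℝ)) :=
  ExteriorAlgebra.ι ℝ (LinearMap.proj i)

/-- `dα4 = -α1∧α3`. -/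
noncomputable def da4 : ExteriorAlgebra ℝ (Module.Dual ℝ (Fin 7 → ℝ)) := -(a7 0 * a7 2)

/-- `dα7 = -α1∧α4 - α2∧α3 - α5∧α6`. -/
noncomputable def da7 : ExteriorAlgebra ℝ (Module.Dual ℝ (Fin 7 → ℝ)) :=
  -(a7 0 * a7 3) - a7 1 * a7 2 - a7 4 * a7 5

lemma a7_sq (i : Fin 7) : a7 i * a7 i = 0 := ExteriorAlgebra.ι_sq_zero _

lemma a7_sq' (i : Fin 7) (x) : a7 i * (a7 i * x) = 0 := by
  rw [← mul_assoc, a7_sq, zero_mul]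

lemma a7_sw (i j : Fin 7) (h : j < i) : a7 i * a7 j = -(a7 j * a7 i) := by
  have := ExteriorAlgebra.ι_add_mul_swap (R := ℝ)
    (LinearMap.proj (R := ℝ) (φ := fun _ : Fin 7 => ℝ) i) (LinearMap.proj j)
  unfold a7
  exact eq_neg_of_add_eq_zero_left this

lemma a7_sw' (i j : Fin 7) (h : j < i) (x) : a7 i * (a7 j * x) = -(a7 j * (a7 i * x)) := by
  rw [← mul_assoc, a7_sw i j h, neg_mul, mul_assoc]

set_option maxHeartbeats 2000000 in
set_option synthInstance.maxHeartbeats 400000 in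
/-- `α7 ∧ (dα7)² ∧ α1 = -2 α1∧α2∧α3∧α5∧α6∧α7 = 2 d(α2∧α4∧α5∧α6∧α7)`, where the
differential of the decomposable 5-cochain is computed by the derivation rule
(`dα2 = dα5 = dα6 = 0`); in particular `α7 ∧ (dα7)² ∧ α1` is exact. -/
theorem stmt16 :
    a7 6 * da7 * da7 * a7 0 = (-2 : ℝ) • (a7 0 * a7 1 * a7 2 * a7 4 * a7 5 * a7 6) ∧
    a7 6 * da7 * da7 * a7 0 =
      (2 : ℝ) • (-(a7 1 * da4 * a7 4 * a7 5 * a7 6) + a7 1 * a7 3 * a7 4 * a7 5 * da7) := by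
  constructor <;>
  · simp only [da7, da4, mul_assoc, mul_sub, sub_mul, mul_neg, neg_mul, mul_add, add_mul,
      neg_neg, smul_add, smul_neg]
    simp (config := { decide := true }) only [a7_sq, a7_sq', a7_sw, a7_sw', mul_zero, zero_mul,
      neg_neg, mul_neg, neg_zero, mul_zero]
    module
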